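/- Let Γ be a group generated by a finite set with associated alphabet A and evaluation homomorphism ρ : A* → Γ, and let F ⊴ Γ be a finite normal subgroup with ℓ := max_{f∈F} |f| (word length). Let π ∈ A* be a word that is geodesic (|π| = |ρ(π)|). Then π contains a (contiguous) subword π' with |π'| ≥ (|π| − ℓ)/(ℓ + 1) such that no nonempty contiguous subword v of π' satisfies ρ(v) ∈ F. -/

import Mathlib

private lemma aux_max18 (l : List ℕ) (hl : l ≠ []) : ∃ x ∈ l, l.sum ≤ l.length * x := by
  induction l with
  | nil => exact absurd rfl hl
  | cons a t ih =>
    rcases eq_or_ne t [] with rfl | ht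
    · exact ⟨a, by simp, by simp⟩
    · obtain ⟨x, hx, hsx⟩ := ih ht
      rcases le_total a x with h | h
      · refine ⟨x, List.mem_cons_of_mem _ hx, ?_⟩
        have hr : (t.length + 1) * x = t.length * x + x := by ring
        simp only [List.sum_cons, List.length_cons]
        linarith
      · refine ⟨a, List.mem_cons_self, ?_⟩
        have h2 : t.length * x ≤ t.length * a := Nat.mul_le_mul_left _ h
        have hr : (t.length + 1) * a = t.length * a + a := by ring
        simp only [List.sum_cons, List.length_cons]
        linarith

/-- if F ⊴ Γ is a finite normal subgroup all of whose elements have word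
length ≤ ℓ, then every geodesic word π contains a contiguous subword π' of length at
least (|π| − ℓ)/(ℓ+1) none of whose nonempty contiguous subwords evaluates into F. -/
theorem stmt18 {Γ A : Type*} [Group Γ] (ρ : List A → Γ)
    (hρ1 : ρ [] = 1) (hρm : ∀ u v : List A, ρ (u ++ v) = ρ u * ρ v)
    (F : Subgroup Γ) [F.Normal] (hF : (F : Set Γ).Finite)
    (ℓ : ℕ) (hℓ : ∀ f ∈ F, ∃ wrd : List A, ρ wrd = f ∧ wrd.length ≤ ℓ)
    (π : List A) (hgeo : ∀ wrd : List A, ρ wrd = ρ π → π.length ≤ wrd.length) :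
    ∃ pre mid suf : List A, π = pre ++ mid ++ suf ∧
      ((π.length : ℝ) - (ℓ : ℝ)) / ((ℓ : ℝ) + 1) ≤ (mid.length : ℝ) ∧
      ∀ (a b v : List A), mid = a ++ v ++ b → v ≠ [] → ρ v ∉ F := by
  classical
  by_cases hn : (π.length : ℝ) ≤ (ℓ : ℝ)
  · refine ⟨π, [], [], by simp, ?_, ?_⟩
    · simp only [List.length_nil, Nat.cast_zero]
      exact div_nonpos_of_nonpos_of_nonneg (by linarith) (by positivity)
    · intro a b v hv hne
      exfalso
      apply hne
      have h := congrArg List.length hv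
      simp at h
      exact List.length_eq_zero_iff.mp (by omega)
  · push_neg at hn
    have hnℕ : ℓ < π.length := by exact_mod_cast hn
    -- the "all pieces good" endgame
    have goodcase : ∀ L : List (List A), (∀ p ∈ L, p <:+: π) →
        (∃ f ∈ F, ρ π = ρ L.flatten * f) →
        L.length + (L.map List.length).sum ≤ π.length + 1 →
        (∀ p ∈ L, ∀ a b v : List A, p = a ++ v ++ b → v ≠ [] → ρ v ∉ F) →
        ∃ mid : List A, mid <:+: π ∧
          ((π.length : ℝ) - (ℓ : ℝ)) / ((ℓ : ℝ) + 1) ≤ (mid.length : ℝ) ∧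
          ∀ a b v : List A, mid = a ++ v ++ b → v ≠ [] → ρ v ∉ F := by
      intro L hinf hf hlen hgood
      obtain ⟨f, hfF, hπf⟩ := hf
      obtain ⟨w, hw, hwl⟩ := hℓ f hfF
      have hval : ρ (L.flatten ++ w) = ρ π := by rw [hρm, hw, hπf]
      have hg := hgeo _ hval
      have hfl : L.flatten.length = (L.map List.length).sum := by
        simp [List.length_flatten]
      rw [List.length_append, hfl] at hg
      have hsum : π.length ≤ (L.map List.length).sum + ℓ := by omega
      have hLne : L ≠ [] := by
        intro h; subst h; simp at hsum; omega
      obtain ⟨x, hx, hsx⟩ := aux_max18 (L.map List.length) (by simpa using hLne)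
      obtain ⟨p, hpL, rfl⟩ := List.mem_map.mp hx
      rw [List.length_map] at hsx
      refine ⟨p, hinf p hpL, ?_, hgood p hpL⟩
      have hk : L.length ≤ ℓ + 1 := by omega
      have h2 : L.length * p.length ≤ (ℓ + 1) * p.length := Nat.mul_le_mul_right _ hk
      have h3 : π.length ≤ (ℓ + 1) * p.length + ℓ :=
        le_trans hsum (Nat.add_le_add_right (hsx.trans h2) ℓ)
      rw [div_le_iff₀ (by positivity : (0:ℝ) < (ℓ:ℝ) + 1)]
      have h4 : (π.length : ℝ) ≤ ((ℓ:ℝ) + 1) * (p.length : ℝ) + (ℓ:ℝ) := by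
        exact_mod_cast h3
      nlinarith
    -- main induction on total remaining length
    have key : ∀ N : ℕ, ∀ L : List (List A), (L.map List.length).sum ≤ N →
        (∀ p ∈ L, p <:+: π) →
        (∃ f ∈ F, ρ π = ρ L.flatten * f) →
        L.length + (L.map List.length).sum ≤ π.length + 1 →
        ∃ mid : List A, mid <:+: π ∧
          ((π.length : ℝ) - (ℓ : ℝ)) / ((ℓ : ℝ) + 1) ≤ (mid.length : ℝ) ∧
          ∀ a b v : List A, mid = a ++ v ++ b → v ≠ [] → ρ v ∉ F := by
      intro N
      induction N with
      | zero =>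
        intro L hS hinf hf hlen
        by_cases hgood : ∀ p ∈ L, ∀ a b v : List A, p = a ++ v ++ b → v ≠ [] → ρ v ∉ F
        · exact goodcase L hinf hf hlen hgood
        · exfalso
          push_neg at hgood
          obtain ⟨p, hpL, a, b, v, hp, hvne, hvF⟩ := hgood
          have h1 : 1 ≤ v.length := List.length_pos_iff.2 hvne
          have h2 : v.length ≤ p.length := by
            have := congrArg List.length hp
            simp [List.length_append] at this
            omega
          have h3 : p.length ≤ (L.map List.length).sum :=
            List.single_le_sum (by intro x _; omega) _ (List.mem_map_of_mem hpL)
          omega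
      | succ N ih =>
        intro L hS hinf hf hlen
        by_cases hgood : ∀ p ∈ L, ∀ a b v : List A, p = a ++ v ++ b → v ≠ [] → ρ v ∉ F
        · exact goodcase L hinf hf hlen hgood
        · push_neg at hgood
          obtain ⟨p, hpL, a, b, v, hp, hvne, hvF⟩ := hgood
          obtain ⟨X, Y, hL⟩ := List.append_of_mem hpL
          have h1 : 1 ≤ v.length := List.length_pos_iff.2 hvne
          -- sums
          have hsum' : ((X ++ a :: b :: Y).map List.length).sum + v.length
              = (L.map List.length).sum := by
            subst hL; subst hp
            simp [List.map_append, List.sum_append, List.length_append]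
            ring
          have hlen' : (X ++ a :: b :: Y).length = L.length + 1 := by
            subst hL
            simp only [List.length_append, List.length_cons]
            omega
          -- infix
          have hinf' : ∀ q ∈ X ++ a :: b :: Y, q <:+: π := by
            intro q hq
            simp only [List.mem_append, List.mem_cons] at hq
            rcases hq with hq | hq | hq | hq
            · exact hinf q (by subst hL; simp [hq])
            · subst hq
              have : q <+: p := ⟨v ++ b, by rw [hp, List.append_assoc]⟩
              exact this.isInfix.trans (hinf p hpL)
            · subst hq
              have : q <:+ p := ⟨a ++ v, by rw [hp]⟩
              exact this.isInfix.trans (hinf p hpL)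
            · exact hinf q (by subst hL; simp [hq])
          -- flatten value
          have hf' : ∃ f' ∈ F, ρ π = ρ (X ++ a :: b :: Y).flatten * f' := by
            obtain ⟨f, hfF, hπf⟩ := hf
            have hgF : (ρ (b ++ Y.flatten))⁻¹ * ρ v * ρ (b ++ Y.flatten) ∈ F := by
              have := Subgroup.Normal.conj_mem ‹F.Normal› _ hvF (ρ (b ++ Y.flatten))⁻¹
              simpa using this
            refine ⟨((ρ (b ++ Y.flatten))⁻¹ * ρ v * ρ (b ++ Y.flatten)) * f,
              F.mul_mem hgF hfF, ?_⟩
            have e1 : L.flatten = (X.flatten ++ a) ++ v ++ (b ++ Y.flatten) := by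
              subst hL; subst hp; simp
            have e2 : (X ++ a :: b :: Y).flatten = (X.flatten ++ a) ++ (b ++ Y.flatten) := by
              simp
            rw [hπf, e1, e2]
            simp only [hρm]
            group
          refine ih (X ++ a :: b :: Y) (by omega) hinf' hf' (by omega)
    obtain ⟨mid, hmid, hbd, hgood⟩ := key π.length [π] (by simp) (by simp)
      ⟨1, F.one_mem, by simp⟩ (by simp [Nat.add_comm])
    obtain ⟨s, t, hst⟩ := hmid
    exact ⟨s, mid, t, hst.symm, hbd, hgood⟩
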